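/- Let G = (Σ, V, S, P) be a context-free grammar in Chomsky normal form (every production has the form Z₀ → Z₁Z₂ with Z₁, Z₂ ∈ V, or Z₀ → b with b ∈ Σ) such that every nonempty word over Σ belongs to L(G). Then the expression e_G = φ₀ − (φ₁ ∪ φ₂ ∪ φ₃ ∪ φ₄ ∪ φ₅ ∪ φ₆ ∪ φ₇) over Γ_G = Σ ∪ V ∪ {α, ω, X}, where φ₀ = αΣω, φ₁ = αΣ(ω − α), φ₂ = α(Σα − α), φ₃ = ⋃_{Z₀→Z₁⋯Zₙ ∈ P} α(Z₁⋯Zₙ − Z₀)α, φ₄ = (α − αΣ)Sω, φ₅ = α(Σ − X)α, φ₆ = α(XX − X)α, φ₇ = α(XΣ ∩ Σ)α, is not finitely satisfiable: e_G(I) = ∅ for every finite structure I over Γ_G. -/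

import Mathlib

/-- Syntax of the Downward Algebra (DA): expressions built from relation names
in a vocabulary `Γ` using union, intersection, difference, and composition. -/
inductive DA (Γ : Type) : Type where
  | var : Γ → DA Γ
  | union : DA Γ → DA Γ → DA Γ
  | inter : DA Γ → DA Γ → DA Γ
  | diff : DA Γ → DA Γ → DA Γ
  | comp : DA Γ → DA Γ → DA Γ

namespace DA

/-- Semantics: the binary relation `e(I)` defined by expression `e` in a structure `I`
(a structure over `Γ` with domain `D` assigns a binary relation on `D` to each name). -/
def eval {Γ D : Type} (I : Γ → D → D → Prop) : DA Γ → D → D → Prop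
  | .var a => I a
  | .union e f => fun x y => eval I e x y ∨ eval I f x y
  | .inter e f => fun x y => eval I e x y ∧ eval I f x y
  | .diff e f => fun x y => eval I e x y ∧ ¬ eval I f x y
  | .comp e f => fun x y => ∃ z, eval I e x z ∧ eval I f z y

/-- The difference degree of an expression. -/
def deg {Γ : Type} : DA Γ → ℕ
  | .var _ => 0
  | .union e f => max (deg e) (deg f)
  | .inter e f => max (deg e) (deg f)
  | .diff e f => max (deg e) (deg f) + 1
  | .comp e f => max (deg e) (deg f)

/-- A structure is finite when each relation is a finite binary relation. -/
def FiniteStruct {Γ D : Type} (I : Γ → D → D → Prop) : Prop :=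
  ∀ a, {p : D × D | I a p.1 p.2}.Finite

/-- An expression is finitely satisfiable if some finite structure makes it
evaluate to a nonempty relation. -/
def FinSat {Γ : Type} (e : DA Γ) : Prop :=
  ∃ (D : Type) (I : Γ → D → D → Prop), FiniteStruct I ∧ ∃ x y, eval I e x y

end DA

/-- The vocabulary Γ_G = Σ ∪ V ∪ {α, ω, X}: a relation name for every terminal,
a relation name for every nonterminal, and three fresh names α, ω, X. -/
inductive Voc (T N : Type) : Type where
  | term : T → Voc T N
  | nt : N → Voc T N
  | alpha : Voc T N
  | omega : Voc T N
  | X : Voc T N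

namespace DA

/-- Union of a nonempty list of expressions (head and tail). -/
def unionAll {Γ : Type} (e : DA Γ) (l : List (DA Γ)) : DA Γ := l.foldl .union e

/-- Composition of a nonempty list of expressions (head and tail). -/
def compAll {Γ : Type} (e : DA Γ) (l : List (DA Γ)) : DA Γ := l.foldl .comp e

end DA

/-- The expression Σ = ⋃_{b ∈ Σ} b, the union of all terminal relation names
(T is a nonempty finite type, so the match never takes the junk branch). -/
noncomputable def sigmaE (T N : Type) [Fintype T] : DA (Voc T N) :=
  match (Finset.univ (α := T)).toList with
  | [] => .var .alpha
  | b :: l => DA.unionAll (.var (.term b)) (l.map fun b' => .var (.term b'))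

/-- The relation name associated to a grammar symbol. -/
def symVoc {T N : Type} : Symbol T N → Voc T N
  | .terminal b => .term b
  | .nonterminal Z => .nt Z

/-- The member α(Z₁⋯Zₙ − Z₀)α of φ₃ contributed by a production Z₀ → Z₁⋯Zₙ
(the grammar has no empty production, so the junk branch for an empty
right-hand side is never taken). -/
def ruleExpr {T N : Type} (r : ContextFreeRule T N) : DA (Voc T N) :=
  .comp (.var .alpha)
    (.comp
      (.diff
        (match r.output with
         | [] => .var .X
         | s :: l => DA.compAll (.var (symVoc s)) (l.map fun s' => .var (symVoc s')))
        (.var (.nt r.input)))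
      (.var .alpha))

/-- The expression e_G = φ₀ − (φ₁ ∪ φ₂ ∪ φ₃ ∪ φ₄ ∪ φ₅ ∪ φ₆ ∪ φ₇) over Γ_G, where
φ₀ = αΣω, φ₁ = αΣ(ω − α), φ₂ = α(Σα − α), φ₃ = ⋃_{Z₀→Z₁⋯Zₙ ∈ P} α(Z₁⋯Zₙ − Z₀)α,
φ₄ = (α − αΣ)Sω, φ₅ = α(Σ − X)α, φ₆ = α(XX − X)α, φ₇ = α(XΣ ∩ Σ)α. -/
noncomputable def eG (T : Type) [Fintype T] (G : ContextFreeGrammar T) : DA (Voc T G.NT) :=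
  let av : DA (Voc T G.NT) := .var .alpha
  let ov : DA (Voc T G.NT) := .var .omega
  let Xv : DA (Voc T G.NT) := .var .X
  let Sv : DA (Voc T G.NT) := .var (.nt G.initial)
  let Se : DA (Voc T G.NT) := sigmaE T G.NT
  let f0 := DA.comp av (DA.comp Se ov)
  let f1 := DA.comp av (DA.comp Se (.diff ov av))
  let f2 := DA.comp av (.diff (DA.comp Se av) av)
  let f4 := DA.comp (.diff av (DA.comp av Se)) (DA.comp Sv ov)
  let f5 := DA.comp av (DA.comp (.diff Se Xv) av)
  let f6 := DA.comp av (DA.comp (.diff (DA.comp Xv Xv) Xv) av)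
  let f7 := DA.comp av (DA.comp (.inter (DA.comp Xv Se) Se) av)
  .diff f0
    (DA.unionAll (.union f1 (.union f2 (.union f4 (.union f5 (.union f6 f7)))))
      (G.rules.toList.map ruleExpr))

section Aux

open DA

lemma eval_unionAll' {Γ D : Type} (I : Γ → D → D → Prop) (e : DA Γ) (l : List (DA Γ))
    (u v : D) :
    DA.eval I (DA.unionAll e l) u v ↔ DA.eval I e u v ∨ ∃ g ∈ l, DA.eval I g u v := by
  induction l generalizing e with
  | nil => simp [DA.unionAll]
  | cons g l ih =>
    have he : DA.unionAll e (g :: l) = DA.unionAll (.union e g) l := rfl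
    rw [he, ih]
    simp only [DA.eval, List.mem_cons]
    constructor
    · rintro ((h | h) | ⟨g', hg', h⟩)
      · exact Or.inl h
      · exact Or.inr ⟨g, Or.inl rfl, h⟩
      · exact Or.inr ⟨g', Or.inr hg', h⟩
    · rintro (h | ⟨g', (rfl | hg'), h⟩)
      · exact Or.inl (Or.inl h)
      · exact Or.inl (Or.inr h)
      · exact Or.inr ⟨g', hg', h⟩

lemma eval_sigmaE' {T N D : Type} [Fintype T] [Nonempty T] (I : Voc T N → D → D → Prop)
    (u v : D) :
    DA.eval I (sigmaE T N) u v ↔ ∃ b : T, I (.term b) u v := by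
  unfold sigmaE
  split
  · next heq => exact absurd (Finset.toList_eq_nil.mp heq) Finset.univ_nonempty.ne_empty
  · next b l heq =>
    rw [eval_unionAll']
    constructor
    · rintro (h | ⟨g, hg, h⟩)
      · exact ⟨b, h⟩
      · simp only [List.mem_map] at hg
        obtain ⟨b', _, rfl⟩ := hg
        exact ⟨b', h⟩
    · rintro ⟨b', h⟩
      have hmem : b' ∈ b :: l := heq ▸ Finset.mem_toList.mpr (Finset.mem_univ b')
      rcases List.mem_cons.mp hmem with rfl | hb'
      · exact Or.inl h
      · exact Or.inr ⟨.var (.term b'), List.mem_map_of_mem hb', h⟩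

/-- A path realizing a sentential form, with all strictly internal points marked by
`α` from `x` and `α` to `y`. -/
def RPath {T N D : Type} (I : Voc T N → D → D → Prop) (x y : D) :
    List (Symbol T N) → D → D → Prop
  | [], u, v => u = v
  | [s], u, v => I (symVoc s) u v
  | s :: s' :: rest, u, v =>
      ∃ m, I (symVoc s) u m ∧ I .alpha x m ∧ I .alpha m y ∧ RPath I x y (s' :: rest) m v

lemma real_cons {T N D : Type} {I : Voc T N → D → D → Prop} {x y : D}
    {s : Symbol T N} {rest : List (Symbol T N)} (hrest : rest ≠ []) {u v : D} :
    RPath I x y (s :: rest) u v ↔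
      ∃ m, I (symVoc s) u m ∧ I .alpha x m ∧ I .alpha m y ∧ RPath I x y rest m v := by
  cases rest with
  | nil => exact absurd rfl hrest
  | cons s' r => exact Iff.rfl

lemma real_append {T N D : Type} {I : Voc T N → D → D → Prop} {x y : D}
    {a b : List (Symbol T N)} (ha : a ≠ []) (hb : b ≠ []) {u v : D} :
    RPath I x y (a ++ b) u v ↔
      ∃ m, RPath I x y a u m ∧ I .alpha x m ∧ I .alpha m y ∧ RPath I x y b m v := by
  induction a generalizing u with
  | nil => exact absurd rfl ha
  | cons s a' ih =>
    by_cases ha' : a' = []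
    · subst ha'
      show RPath I x y (s :: b) u v ↔ _
      rw [real_cons hb]
      constructor
      · rintro ⟨m, h1, h2, h3, h4⟩; exact ⟨m, h1, h2, h3, h4⟩
      · rintro ⟨m, h1, h2, h3, h4⟩; exact ⟨m, h1, h2, h3, h4⟩
    · have hab : a' ++ b ≠ [] := fun h => ha' (List.append_eq_nil_iff.mp h).1
      show RPath I x y (s :: (a' ++ b)) u v ↔ _
      rw [real_cons hab]
      constructor
      · rintro ⟨m, h1, h2, h3, h4⟩
        obtain ⟨m', g1, g2, g3, g4⟩ := (ih ha').mp h4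
        exact ⟨m', (real_cons ha').mpr ⟨m, h1, h2, h3, g1⟩, g2, g3, g4⟩
      · rintro ⟨m', hm', g2, g3, g4⟩
        obtain ⟨m, h1, h2, h3, g1⟩ := (real_cons ha').mp hm'
        exact ⟨m, h1, h2, h3, (ih ha').mpr ⟨m', g1, g2, g3, g4⟩⟩

lemma real_of_rewrite {T N D : Type} {I : Voc T N → D → D → Prop} {x y u v : D}
    {r : ContextFreeRule T N} (hout : r.output ≠ [])
    (hr : ∀ u v, I .alpha x u → I .alpha v y → RPath I x y r.output u v →
      I (.nt r.input) u v)
    {a c : List (Symbol T N)} (hw : r.Rewrites a c)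
    (hu : I .alpha x u) (hv : I .alpha v y) (h : RPath I x y c u v) :
    RPath I x y a u v := by
  obtain ⟨p, q, rfl, rfl⟩ := hw.exists_parts
  rw [List.append_assoc] at h ⊢
  by_cases hp : p = []
  · subst hp
    rw [List.nil_append] at h ⊢
    by_cases hq : q = []
    · subst hq
      rw [List.append_nil] at h ⊢
      exact hr u v hu hv h
    · rw [real_append hout hq] at h
      obtain ⟨m, h1, h2, h3, h4⟩ := h
      rw [real_append (by simp) hq]
      exact ⟨m, hr u m hu h3 h1, h2, h3, h4⟩
  · by_cases hq : q = []
    · subst hq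
      rw [List.append_nil] at h ⊢
      rw [real_append hp hout] at h
      obtain ⟨m, h1, h2, h3, h4⟩ := h
      rw [real_append hp (by simp)]
      exact ⟨m, h1, h2, h3, hr m v h2 hv h4⟩
    · have hoq : r.output ++ q ≠ [] := fun hh => hq (List.append_eq_nil_iff.mp hh).2
      rw [real_append hp hoq] at h
      obtain ⟨m, h1, h2, h3, h4⟩ := h
      rw [real_append hout hq] at h4
      obtain ⟨m', g1, g2, g3, g4⟩ := h4
      rw [real_append hp (show [Symbol.nonterminal r.input] ++ q ≠ [] by simp)]
      refine ⟨m, h1, h2, h3, ?_⟩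
      rw [real_append (by simp) hq]
      exact ⟨m', hr m m' h2 g3 g1, g2, g3, g4⟩

lemma real_lift {T D : Type} {g : ContextFreeGrammar T} {I : Voc T g.NT → D → D → Prop}
    {x y : D}
    (hr : ∀ r ∈ g.rules, r.output ≠ [] ∧
      ∀ u v, I .alpha x u → I .alpha v y → RPath I x y r.output u v → I (.nt r.input) u v)
    {s t : List (Symbol T g.NT)} (hd : g.Derives s t) {u v : D}
    (hu : I .alpha x u) (hv : I .alpha v y) (h : RPath I x y t u v) :
    RPath I x y s u v := by
  induction hd using Relation.ReflTransGen.head_induction_on with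
  | refl => exact h
  | head hstep _ ih =>
    obtain ⟨r, hrm, hrw⟩ := hstep
    exact real_of_rewrite (hr r hrm).1 (hr r hrm).2 hrw hu hv ih

end Aux

/-- If G is a context-free grammar in Chomsky normal form (every production is of
the form Z₀ → Z₁Z₂ with nonterminals Z₁, Z₂, or Z₀ → b with a terminal b) such that
every nonempty word over Σ belongs to L(G), then e_G is not finitely satisfiable:
e_G evaluates to the empty relation in every finite structure over Γ_G. -/
theorem stmt4 (T : Type) [Fintype T] [Nonempty T] (G : ContextFreeGrammar T)
    (hCNF : ∀ r ∈ G.rules,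
      (∃ Z₁ Z₂ : G.NT, r.output = [Symbol.nonterminal Z₁, Symbol.nonterminal Z₂]) ∨
      (∃ b : T, r.output = [Symbol.terminal b]))
    (huniv : ∀ w : List T, w ≠ [] → w ∈ G.language)
    (D : Type) (I : Voc T G.NT → D → D → Prop) (hfin : DA.FiniteStruct I)
    (x y : D) :
    ¬ DA.eval I (eG T G) x y := by
  classical
  intro heval
  simp only [eG, DA.eval] at heval
  obtain ⟨h0, hneg⟩ := heval
  rw [eval_unionAll'] at hneg
  push_neg at hneg
  obtain ⟨hA, hB⟩ := hneg
  simp only [DA.eval] at hA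
  have hn1 := fun h => hA (Or.inl h)
  have hA2 := fun h => hA (Or.inr h)
  have hn2 := fun h => hA2 (Or.inl h)
  have hA3 := fun h => hA2 (Or.inr h)
  have hn4 := fun h => hA3 (Or.inl h)
  have hA4 := fun h => hA3 (Or.inr h)
  have hn5 := fun h => hA4 (Or.inl h)
  have hA5 := fun h => hA4 (Or.inr h)
  have hn6 := fun h => hA5 (Or.inl h)
  have hn7 := fun h => hA5 (Or.inr h)
  clear hA hA2 hA3 hA4 hA5
  -- rule lifting from φ₃
  have nr : ∀ r ∈ G.rules, r.output ≠ [] ∧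
      ∀ u v, I .alpha x u → I .alpha v y → RPath I x y r.output u v →
        I (.nt r.input) u v := by
    intro r hrm
    have hbr : ¬ DA.eval I (ruleExpr r) x y :=
      hB _ (List.mem_map_of_mem (f := ruleExpr) (Finset.mem_toList.mpr hrm))
    rcases hCNF r hrm with ⟨Z1, Z2, hout⟩ | ⟨b, hout⟩
    · refine ⟨by simp [hout], ?_⟩
      intro u v hu hv hreal
      by_contra hc
      apply hbr
      unfold ruleExpr
      rw [hout]
      rw [hout] at hreal
      obtain ⟨m, e1, gm1, gm2, e2⟩ := hreal
      exact ⟨u, hu, v, ⟨⟨m, e1, e2⟩, hc⟩, hv⟩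
    · refine ⟨by simp [hout], ?_⟩
      intro u v hu hv hreal
      by_contra hc
      apply hbr
      unfold ruleExpr
      rw [hout]
      rw [hout] at hreal
      exact ⟨u, hu, v, ⟨hreal, hc⟩, hv⟩
  -- initial data from φ₀
  obtain ⟨u0, hxu0, v0, hb0, hw0⟩ := h0
  have hyv0 : I .alpha v0 y := by
    by_contra hc
    exact hn1 ⟨u0, hxu0, v0, hb0, hw0, hc⟩
  have hyu0 : I .alpha u0 y := by
    by_contra hc
    exact hn2 ⟨u0, hxu0, ⟨v0, hb0, hyv0⟩, hc⟩
  -- the infinite backwards chain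
  let step : D → D := fun u =>
    if h : ∃ w', I .alpha x w' ∧ I .alpha w' y ∧ DA.eval I (sigmaE T G.NT) w' u
    then h.choose else u
  let w : ℕ → D := fun n => Nat.rec u0 (fun _ p => step p) n
  let Q : ℕ → Prop := fun n => I .alpha x (w n) ∧ I .alpha (w n) y ∧
    ∃ lw : List T, lw ≠ [] ∧ RPath I x y (lw.map Symbol.terminal) (w n) v0
  have hstep : ∀ n, Q n → Q (n+1) ∧ DA.eval I (sigmaE T G.NT) (w (n+1)) (w n) := by
    rintro n ⟨hxn, hyn, lw, hlw, hre⟩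
    have hder : G.Derives [Symbol.nonterminal G.initial] (lw.map Symbol.terminal) :=
      (G.mem_language_iff lw).mp (huniv lw hlw)
    have hS : I (.nt G.initial) (w n) v0 := real_lift nr hder hxn hyv0 hre
    have hex : ∃ w', I .alpha x w' ∧ I .alpha w' y ∧
        DA.eval I (sigmaE T G.NT) w' (w n) := by
      have h4 : ∃ w', I .alpha x w' ∧ DA.eval I (sigmaE T G.NT) w' (w n) := by
        by_contra hc
        exact hn4 ⟨w n, ⟨hxn, hc⟩, v0, hS, hw0⟩
      obtain ⟨w', hw1, hw2⟩ := h4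
      have hw3 : I .alpha w' y := by
        by_contra hc
        exact hn2 ⟨w', hw1, ⟨w n, hw2, hyn⟩, hc⟩
      exact ⟨w', hw1, hw3, hw2⟩
    have hw1 : w (n+1) = hex.choose := by
      show (if h : ∃ w', I .alpha x w' ∧ I .alpha w' y ∧
          DA.eval I (sigmaE T G.NT) w' (w n) then h.choose else w n) = hex.choose
      exact dif_pos hex
    obtain ⟨ha1, ha2, ha3⟩ := hex.choose_spec
    rw [← hw1] at ha1 ha2 ha3
    refine ⟨⟨ha1, ha2, ?_⟩, ha3⟩
    obtain ⟨b, hbterm⟩ := (eval_sigmaE' I _ _).mp ha3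
    refine ⟨b :: lw, by simp, ?_⟩
    have hmne : lw.map (Symbol.terminal : T → Symbol T G.NT) ≠ [] := by simp [hlw]
    exact (real_cons hmne).mpr ⟨w n, hbterm, hxn, hyn, hre⟩
  have hQ : ∀ n, Q n := by
    intro n
    induction n with
    | zero =>
      refine ⟨hxu0, hyu0, ?_⟩
      obtain ⟨b0, hb0t⟩ := (eval_sigmaE' I _ _).mp hb0
      exact ⟨[b0], by simp, hb0t⟩
    | succ n ih => exact (hstep n ih).1
  have hE : ∀ n, DA.eval I (sigmaE T G.NT) (w (n+1)) (w n) := fun n => (hstep n (hQ n)).2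
  have hX1 : ∀ n, I .X (w (n+1)) (w n) := by
    intro n
    by_contra hc
    exact hn5 ⟨w (n+1), (hQ (n+1)).1, ⟨w n, ⟨hE n, hc⟩, (hQ n).2.1⟩⟩
  have hXk : ∀ n k, I .X (w (n+k+1)) (w n) := by
    intro n k
    induction k with
    | zero => exact hX1 n
    | succ k ih =>
      by_contra hc
      exact hn6 ⟨w (n+k+2), (hQ (n+k+2)).1, w n, ⟨⟨w (n+k+1), hX1 (n+k+1), ih⟩, hc⟩,
        (hQ n).2.1⟩
  have hlt : ∀ i j, i < j → I .X (w j) (w i) := by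
    intro i j hij
    obtain ⟨k, rfl⟩ : ∃ k, j = i + k + 1 := ⟨j - i - 1, by omega⟩
    exact hXk i k
  have key : ∀ i j, i < j → w i = w j → False := by
    intro i j hij heq
    have hXii : I .X (w i) (w i) := by
      have h := hlt i j hij
      rw [← heq] at h
      exact h
    cases i with
    | zero => exact hn7 ⟨w 0, (hQ 0).1, v0, ⟨⟨w 0, hXii, hb0⟩, hb0⟩, hyv0⟩
    | succ m =>
      exact hn7 ⟨w (m+1), (hQ (m+1)).1, w m, ⟨⟨w (m+1), hXii, hE m⟩, hE m⟩, (hQ m).2.1⟩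
  have hinj : Function.Injective w := by
    intro i j hij
    rcases Nat.lt_trichotomy i j with h | h | h
    · exact (key i j h hij).elim
    · exact h
    · exact (key j i h hij.symm).elim
  have hinf : Set.Infinite {p : D × D | I .alpha p.1 p.2} :=
    Set.infinite_of_injective_forall_mem (f := fun n : ℕ => (x, w n))
      (fun a b hab => hinj (congrArg Prod.snd hab)) (fun n => (hQ n).1)
  exact hinf (hfin .alpha)
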